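/- Let s, t : V → {0,1} be signals with edge homophily ratios satisfying h_s < h_t. Let n = |V|, and let v₀, …, v_{n−1} be an orthonormal family of vectors in ℝ^V together with real numbers λ₀ ≤ λ₁ ≤ … ≤ λ_{n−1} such that λ₀ = 0 and L v_i = λ_i v_i for every i. Define the spectral coefficients c_{s,i} = ⟨s, v_i⟩ and c_{t,i} = ⟨t, v_i⟩. Then there exists an integer M with 1 ≤ M ≤ n−1 such that Σ_{i=M}^{n−1} c_{s,i}² > Σ_{i=M}^{n−1} c_{t,i}². (Theorem 3: the signal with lower edge homophily has higher energy in the high-frequency components of the spectrum of the unnormalized graph Laplacian.) -/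

import Mathlib

open Finset

lemma aux_sum_adj_eq_two_mul {V : Type*} [Fintype V] [DecidableEq V]
    (G : SimpleGraph V) [DecidableRel G.Adj]
    (f : V → V → ℝ) (hf : ∀ a b, f a b = f b a) :
    ∑ i : V, ∑ j : V, (if G.Adj i j then f i j else 0)
      = 2 * ∑ e ∈ G.edgeFinset, Sym2.lift ⟨f, fun a b => hf a b⟩ e := by
  have h1 : ∑ i : V, ∑ j : V, (if G.Adj i j then f i j else 0)
      = ∑ d : G.Dart, Sym2.lift ⟨f, fun a b => hf a b⟩ d.edge := by
    rw [← Finset.sum_product', ← Finset.sum_filter]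
    refine (Finset.sum_bij (fun (d : G.Dart) _ => d.toProd) ?_ ?_ ?_ ?_).symm
    · intro d _
      simp [d.adj]
    · intro d₁ _ d₂ _ h
      exact SimpleGraph.Dart.ext _ _ h
    · intro p hp
      simp only [Finset.mem_filter] at hp
      exact ⟨⟨p, hp.2⟩, Finset.mem_univ _, rfl⟩
    · rintro ⟨⟨a, b⟩, h⟩ _
      simp [SimpleGraph.Dart.edge]
  rw [h1]
  rw [← Finset.sum_fiberwise_of_maps_to (g := SimpleGraph.Dart.edge)
      (t := G.edgeFinset) (fun d _ => by simp [SimpleGraph.Dart.edge_mem])]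
  rw [Finset.mul_sum]
  refine Finset.sum_congr rfl fun e he => ?_
  rw [Finset.sum_congr rfl (fun d hd => by
    rw [(Finset.mem_filter.mp hd).2]), Finset.sum_const, nsmul_eq_mul]
  congr 1
  have := G.dart_edge_fiber_card e (by rwa [← SimpleGraph.mem_edgeFinset])
  exact_mod_cast this

lemma aux_qf {V : Type*} [Fintype V] [DecidableEq V]
    (G : SimpleGraph V) [DecidableRel G.Adj]
    (n : ℕ) (hn : n = Fintype.card V) (v : Fin n → (V → ℝ))
    (horth : ∀ i j, dotProduct (v i) (v j) = if i = j then (1 : ℝ) else 0)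
    (lam : Fin n → ℝ)
    (heig : ∀ i, Matrix.mulVec (G.lapMatrix ℝ) (v i) = lam i • v i)
    (x : V → ℝ) :
    dotProduct x (Matrix.mulVec (G.lapMatrix ℝ) x)
      = ∑ i : Fin n, lam i * (dotProduct x (v i)) ^ 2 := by
  have e : Fin n ≃ V := Fintype.equivOfCardEq (by simp [hn])
  set P : Matrix (Fin n) V ℝ := Matrix.of v with hP
  have hPPt : P * P.transpose = 1 := by
    ext i j
    simp only [Matrix.mul_apply, Matrix.transpose_apply, Matrix.one_apply, hP, Matrix.of_apply]
    exact horth i j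
  have hPtP : P.transpose * P = 1 := (Matrix.mul_eq_one_comm_of_equiv e).mp hPPt
  have hcol : ∀ u u' : V, ∑ i : Fin n, v i u * v i u' = if u = u' then (1:ℝ) else 0 := by
    intro u u'
    have := congrFun (congrFun hPtP u) u'
    simpa [Matrix.mul_apply, Matrix.transpose_apply, Matrix.one_apply, hP] using this
  have hx : x = ∑ i : Fin n, (dotProduct x (v i)) • v i := by
    funext u
    simp only [Finset.sum_apply, Pi.smul_apply, smul_eq_mul, dotProduct]
    rw [Finset.sum_congr rfl (fun i _ => Finset.sum_mul ..)]
    rw [Finset.sum_comm]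
    have : ∀ u' : V, ∑ i : Fin n, x u' * v i u' * v i u = x u' * ∑ i : Fin n, v i u' * v i u := by
      intro u'; rw [Finset.mul_sum]; exact Finset.sum_congr rfl fun i _ => by ring
    rw [Finset.sum_congr rfl fun u' _ => this u']
    simp [hcol]
  have hmv : Matrix.mulVec (G.lapMatrix ℝ) x
      = ∑ i : Fin n, ((dotProduct x (v i)) * lam i) • v i := by
    conv_lhs => rw [hx]
    rw [← Matrix.mulVecLin_apply, map_sum]
    refine Finset.sum_congr rfl fun i _ => ?_
    rw [map_smul, Matrix.mulVecLin_apply, heig i, smul_smul]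
  rw [hmv]
  have : ∀ i : Fin n, dotProduct x (((dotProduct x (v i)) * lam i) • v i)
      = lam i * (dotProduct x (v i)) ^ 2 := by
    intro i
    rw [dotProduct_smul]
    simp only [smul_eq_mul]; ring
  have hds : ∀ (w : Fin n → V → ℝ),
      dotProduct x (∑ i : Fin n, w i) = ∑ i : Fin n, dotProduct x (w i) := by
    intro w
    simp only [dotProduct, Finset.sum_apply, Finset.mul_sum]
    exact Finset.sum_comm
  rw [hds]
  exact Finset.sum_congr rfl fun i _ => this i

lemma aux_qf_01 {V : Type*} [Fintype V] [DecidableEq V]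
    (G : SimpleGraph V) [DecidableRel G.Adj]
    (x : V → ℝ) (hx : ∀ u, x u = 0 ∨ x u = 1) :
    dotProduct x (Matrix.mulVec (G.lapMatrix ℝ) x)
      = (G.edgeFinset.card : ℝ) - ∑ e ∈ G.edgeFinset,
          Sym2.lift ⟨fun u w => if x u = x w then (1 : ℝ) else 0,
            fun u w => if_congr eq_comm rfl rfl⟩ e := by
  have h0 : dotProduct x (Matrix.mulVec (G.lapMatrix ℝ) x)
      = (∑ i : V, ∑ j : V, if G.Adj i j then (x i - x j)^2 else 0) / 2 := by
    rw [← Matrix.toLinearMap₂'_apply', SimpleGraph.lapMatrix_toLinearMap₂']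
  have hpt : ∀ i j : V, (if G.Adj i j then (x i - x j)^2 else 0)
      = (if G.Adj i j then (1:ℝ) else 0)
        - (if G.Adj i j then (if x i = x j then (1:ℝ) else 0) else 0) := by
    intro i j
    by_cases h : G.Adj i j
    · simp only [if_pos h]
      rcases hx i with h1 | h1 <;> rcases hx j with h2 | h2 <;>
        rcases eq_or_ne (x i) (x j) with h3 | h3 <;>
        simp [h1, h2, h3] at * <;> norm_num
    · simp [h]
  have h1 : ∑ i : V, ∑ j : V, (if G.Adj i j then (1:ℝ) else 0)
      = 2 * (G.edgeFinset.card : ℝ) := by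
    rw [aux_sum_adj_eq_two_mul G (fun _ _ => (1:ℝ)) (fun _ _ => rfl)]
    congr 1
    have hone : ∀ e ∈ G.edgeFinset,
        Sym2.lift ⟨fun (_ _ : V) => (1:ℝ), fun _ _ => rfl⟩ e = 1 :=
      fun e _ => Sym2.ind (fun a b => rfl) e
    rw [Finset.sum_congr rfl hone]
    simp [mul_comm]
  have h2 : ∑ i : V, ∑ j : V, (if G.Adj i j then (if x i = x j then (1:ℝ) else 0) else 0)
      = 2 * ∑ e ∈ G.edgeFinset,
          Sym2.lift ⟨fun u w => if x u = x w then (1 : ℝ) else 0,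
            fun u w => if_congr eq_comm rfl rfl⟩ e :=
    aux_sum_adj_eq_two_mul G _ _
  rw [h0]
  simp_rw [hpt, Finset.sum_sub_distrib]
  rw [h1, h2]
  ring

lemma aux_abel {n : ℕ} (hn1 : 1 ≤ n) (lam : Fin n → ℝ) (hmono : Monotone lam)
    (hlam0 : ∀ h0 : 0 < n, lam ⟨0, h0⟩ = 0) (g : Fin n → ℝ)
    (htail : ∀ M : ℕ, 1 ≤ M → M ≤ n - 1 →
      ∑ i ∈ Finset.univ.filter (fun i : Fin n => M ≤ (i : ℕ)), g i ≤ 0) :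
    ∑ i : Fin n, lam i * g i ≤ 0 := by
  set L : ℕ → ℝ := fun M => lam ⟨min M (n-1), by omega⟩ with hL
  have hLmono : Monotone L := fun a b hab => hmono (by simp [Fin.le_def]; omega)
  have hL0 : L 0 = 0 := by
    have := hlam0 (by omega)
    simpa [hL] using this
  have hLi : ∀ i : Fin n, L (i : ℕ) = lam i := by
    intro i
    have : min (i : ℕ) (n-1) = (i : ℕ) := by omega
    simp [hL, this]
  have htel : ∀ i : Fin n, lam i = ∑ j ∈ Finset.range (i : ℕ), (L (j+1) - L j) := by
    intro i
    rw [Finset.sum_range_sub L (i : ℕ), hL0, sub_zero, hLi]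
  calc ∑ i : Fin n, lam i * g i
      = ∑ i : Fin n, ∑ j ∈ Finset.range (i : ℕ), (L (j+1) - L j) * g i := by
        refine Finset.sum_congr rfl fun i _ => ?_
        rw [htel i, Finset.sum_mul]
    _ = ∑ i : Fin n, ∑ j ∈ Finset.range (n-1),
          (if j < (i : ℕ) then (L (j+1) - L j) * g i else 0) := by
        refine Finset.sum_congr rfl fun i _ => ?_
        rw [← Finset.sum_filter]
        congr 1
        ext j
        simp only [Finset.mem_filter, Finset.mem_range]
        have : (i : ℕ) ≤ n - 1 := by omega
        omega
    _ = ∑ j ∈ Finset.range (n-1), ∑ i : Fin n,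
          (if j < (i : ℕ) then (L (j+1) - L j) * g i else 0) := Finset.sum_comm
    _ = ∑ j ∈ Finset.range (n-1), (L (j+1) - L j) *
          ∑ i ∈ Finset.univ.filter (fun i : Fin n => j + 1 ≤ (i : ℕ)), g i := by
        refine Finset.sum_congr rfl fun j _ => ?_
        rw [Finset.mul_sum, Finset.sum_filter]
        exact Finset.sum_congr rfl fun i _ => if_congr Nat.lt_iff_add_one_le rfl rfl
    _ ≤ 0 := by
        refine Finset.sum_nonpos fun j hj => ?_
        have hj' := Finset.mem_range.mp hj
        have hd : 0 ≤ L (j+1) - L j := sub_nonneg.mpr (hLmono (by omega))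
        have ht := htail (j+1) (by omega) (by omega)
        exact mul_nonpos_of_nonneg_of_nonpos hd ht

/-- Theorem 3: let `s, t` be `{0,1}`-valued signals on a finite simple graph `G` (with
at least one edge) whose edge homophily ratios satisfy `h_s < h_t`, and let
`v₀, …, v_{n-1}` (with `n = |V|`) be an orthonormal eigenfamily of the unnormalized
Laplacian `L` with nondecreasing eigenvalues `λ₀ = 0 ≤ λ₁ ≤ … ≤ λ_{n-1}`. Then there
is `1 ≤ M ≤ n-1` such that the high-frequency energies of the spectral coefficients
satisfy `Σ_{i=M}^{n-1} c_{s,i}² > Σ_{i=M}^{n-1} c_{t,i}²`. -/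
theorem h2gcn_lower_homophily_higher_frequency_energy
    {V : Type*} [Fintype V] [DecidableEq V]
    (G : SimpleGraph V) [DecidableRel G.Adj]
    (hE : G.edgeFinset.Nonempty)
    (s t : V → ℝ) (hs : ∀ v, s v = 0 ∨ s v = 1) (ht : ∀ v, t v = 0 ∨ t v = 1)
    (hst : (∑ e ∈ G.edgeFinset,
        Sym2.lift ⟨fun u v => if s u = s v then (1 : ℝ) else 0,
          fun u v => if_congr eq_comm rfl rfl⟩ e) / (G.edgeFinset.card : ℝ) <
      (∑ e ∈ G.edgeFinset,
        Sym2.lift ⟨fun u v => if t u = t v then (1 : ℝ) else 0,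
          fun u v => if_congr eq_comm rfl rfl⟩ e) / (G.edgeFinset.card : ℝ))
    (n : ℕ) (hn : n = Fintype.card V)
    (v : Fin n → (V → ℝ))
    (horth : ∀ i j, dotProduct (v i) (v j) = if i = j then (1 : ℝ) else 0)
    (lam : Fin n → ℝ) (hmono : Monotone lam)
    (hlam0 : ∀ h0 : 0 < n, lam ⟨0, h0⟩ = 0)
    (heig : ∀ i, Matrix.mulVec (G.lapMatrix ℝ) (v i) = lam i • v i) :
    ∃ M : ℕ, 1 ≤ M ∧ M ≤ n - 1 ∧
      ∑ i ∈ Finset.univ.filter (fun i : Fin n => M ≤ (i : ℕ)),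
          (dotProduct t (v i)) ^ 2 <
      ∑ i ∈ Finset.univ.filter (fun i : Fin n => M ≤ (i : ℕ)),
          (dotProduct s (v i)) ^ 2 := by
  classical
  obtain ⟨e0, he0⟩ := hE
  have he0' : e0 ∈ G.edgeSet := SimpleGraph.mem_edgeFinset.mp he0
  obtain ⟨a, b, hab⟩ : ∃ a b, G.Adj a b := by
    revert he0'
    induction e0 using Sym2.ind with
    | _ a b => exact fun h => ⟨a, b, h⟩
  have hnt : Nontrivial V := ⟨a, b, hab.ne⟩
  have hn2 : 1 ≤ n := by rw [hn]; exact Fintype.card_pos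
  have hEpos : (0:ℝ) < (G.edgeFinset.card : ℝ) := by
    exact_mod_cast Finset.card_pos.mpr ⟨e0, he0⟩
  rw [div_lt_div_iff₀ hEpos hEpos] at hst
  have hH := lt_of_mul_lt_mul_right hst (le_of_lt hEpos)
  have hqs := aux_qf_01 G s hs
  have hqt := aux_qf_01 G t ht
  have hqs' := aux_qf G n hn v horth lam heig s
  have hqt' := aux_qf G n hn v horth lam heig t
  have hgt : ∑ i : Fin n, lam i * (dotProduct t (v i)) ^ 2
      < ∑ i : Fin n, lam i * (dotProduct s (v i)) ^ 2 := by
    rw [← hqs', ← hqt', hqs, hqt]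
    linarith
  by_contra hcon
  push_neg at hcon
  have habel := aux_abel hn2 lam hmono hlam0
    (fun i => (dotProduct s (v i)) ^ 2 - (dotProduct t (v i)) ^ 2)
    (by
      intro M hM1 hM2
      rw [Finset.sum_sub_distrib]
      have := hcon M hM1 hM2
      linarith)
  simp only [mul_sub, Finset.sum_sub_distrib] at habel
  linarith
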